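/- arXiv:1807.08398 — 2 statements merged into one kernel-verified Lean document; each statement's English description precedes it below -/
import Mathlib

section
/- Let Z be the Randers norm with Zermelo data (⟨·,·⟩, W) on a finite-dimensional real inner product space V, where ‖W‖ < 1. Suppose v ∈ V with v ≠ 0 and w̃ ∈ V with w̃ ≠ 0 are such that g_v(v,u) = ⟨w̃, u⟩ for all u ∈ V (i.e., v is the Z-gradient of a covector whose Riemannian gradient is w̃). Then (‖w̃‖ / Z(v)) · (v − Z(v)·W) = w̃. -/
open scoped RealInnerProductSpace
open Classical

/-- The Randers norm with Zermelo data `(⟪·,·⟫, W)` on a real inner product space: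
`Z(0) = 0` and, for `v ≠ 0`,
`Z(v) = (√(⟪W,v⟫² + (1 − ‖W‖²)‖v‖²) − ⟪W,v⟫)/(1 − ‖W‖²)`. -/
noncomputable def randers {V : Type*} [NormedAddCommGroup V] [InnerProductSpace ℝ V]
    (W : V) (v : V) : ℝ :=
  if v = 0 then 0
  else (Real.sqrt (⟪W, v⟫ ^ 2 + (1 - ‖W‖ ^ 2) * ‖v‖ ^ 2) - ⟪W, v⟫) / (1 - ‖W‖ ^ 2)

/-- The fundamental tensor of a (Minkowski) norm `F` at the point `v`, evaluated on the
pair of vectors `(u, w)`: one half of the second Fréchet derivative of `F²` at `v`. -/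
noncomputable def fundamentalTensor {V : Type*} [NormedAddCommGroup V] [NormedSpace ℝ V]
    (F : V → ℝ) (v u w : V) : ℝ :=
  (1 / 2) * iteratedFDeriv ℝ 2 (fun x => F x ^ 2) v ![u, w]

section Aux

variable {V : Type*} [NormedAddCommGroup V] [InnerProductSpace ℝ V]

noncomputable def sA (W x : V) : ℝ := ⟪W, x⟫ ^ 2 + (1 - ‖W‖ ^ 2) * ‖x‖ ^ 2

noncomputable def rF (W x : V) : ℝ := (Real.sqrt (sA W x) - ⟪W, x⟫) / (1 - ‖W‖ ^ 2)

noncomputable def innerCLM2 : V →L[ℝ] V →L[ℝ] ℝ := innerSL ℝ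

@[simp] lemma innerCLM2_apply (x y : V) : innerCLM2 x y = ⟪x, y⟫ := rfl

lemma myInnerSL_apply (x y : V) : (innerSL ℝ x : V →L[ℝ] ℝ) y = ⟪x, y⟫ := rfl

noncomputable def rP (W x : V) : V →L[ℝ] ℝ :=
  (2 * rF W x / (1 - ‖W‖ ^ 2)) •
    ((Real.sqrt (sA W x))⁻¹ •
      (⟪W, x⟫ • (innerSL ℝ W) + (1 - ‖W‖ ^ 2) • (innerCLM2 x)) - innerSL ℝ W)

lemma hc_pos {W : V} (hW : ‖W‖ < 1) : 0 < 1 - ‖W‖ ^ 2 := by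
  nlinarith [norm_nonneg W]

lemma sA_pos {W : V} (hW : ‖W‖ < 1) {x : V} (hx : x ≠ 0) : 0 < sA W x := by
  have h1 : 0 < ‖x‖ ^ 2 := pow_pos (norm_pos_iff.mpr hx) 2
  have := hc_pos hW
  unfold sA; nlinarith [sq_nonneg ⟪W, x⟫]

lemma randers_eq (W : V) {x : V} (hx : x ≠ 0) : randers W x = rF W x := by
  simp [randers, rF, sA, hx]

lemma rF_pos {W : V} (hW : ‖W‖ < 1) {x : V} (hx : x ≠ 0) : 0 < rF W x := by
  have hc := hc_pos hW
  have h1 : 0 < (1 - ‖W‖ ^ 2) * ‖x‖ ^ 2 :=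
    mul_pos hc (pow_pos (norm_pos_iff.mpr hx) 2)
  have h2 : ⟪W, x⟫ < Real.sqrt (sA W x) := by
    have h3 : |⟪W, x⟫| = Real.sqrt (⟪W, x⟫ ^ 2) := (Real.sqrt_sq_eq_abs _).symm
    have h4 : Real.sqrt (⟪W, x⟫ ^ 2) < Real.sqrt (sA W x) := by
      apply Real.sqrt_lt_sqrt (sq_nonneg _)
      unfold sA; linarith
    calc ⟪W, x⟫ ≤ |⟪W, x⟫| := le_abs_self _
      _ < _ := h3 ▸ h4
  exact div_pos (by linarith) hc

lemma hasFDerivAt_sA {W : V} (x : V) :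
    HasFDerivAt (sA W)
      ((2 * ⟪W, x⟫) • (innerSL ℝ W) +
        (1 - ‖W‖ ^ 2) • (2 • (innerSL ℝ x).comp (ContinuousLinearMap.id ℝ V))) x := by
  have hb : HasFDerivAt (fun y : V => ⟪W, y⟫) (innerSL ℝ W) x := (innerSL ℝ W).hasFDerivAt
  have hb2 := hb.mul hb
  have hn : HasFDerivAt (fun y : V => ‖y‖ ^ 2)
      (2 • (innerSL ℝ x).comp (ContinuousLinearMap.id ℝ V)) x := (hasFDerivAt_id x).norm_sq
  have h := hb2.add (hn.const_mul (1 - ‖W‖ ^ 2))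
  have hfun : (fun y : V => ⟪W, y⟫ * ⟪W, y⟫ + (1 - ‖W‖ ^ 2) * ‖y‖ ^ 2) = sA W := by
    funext y; simp only [sA]; ring
  rw [show ((fun y : V => ⟪W, y⟫) * fun y : V => ⟪W, y⟫) + (fun y : V => (1 - ‖W‖ ^ 2) * ‖y‖ ^ 2)
      = sA W from hfun] at h
  refine h.congr_fderiv ?_
  ext u
  simp only [ContinuousLinearMap.add_apply, ContinuousLinearMap.coe_smul', Pi.smul_apply,
    myInnerSL_apply, ContinuousLinearMap.comp_apply, ContinuousLinearMap.id_apply,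
    ContinuousLinearMap.smul_apply, smul_eq_mul, nsmul_eq_mul, Nat.cast_ofNat]
  ring

lemma hasFDerivAt_rF_sq {W : V} (hW : ‖W‖ < 1) {x : V} (hx : x ≠ 0) :
    HasFDerivAt (fun y => rF W y ^ 2) (rP W x) x := by
  have hc := hc_pos hW
  have hA := sA_pos hW hx
  have hs : Real.sqrt (sA W x) ≠ 0 := ne_of_gt (Real.sqrt_pos.mpr hA)
  have hb : HasFDerivAt (fun y : V => ⟪W, y⟫) (innerSL ℝ W) x := (innerSL ℝ W).hasFDerivAt
  have hsqrt := (hasFDerivAt_sA (W := W) x).sqrt (ne_of_gt hA)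
  have hφ : HasFDerivAt (fun y => Real.sqrt (sA W y) - ⟪W, y⟫) _ x := hsqrt.sub hb
  have hg1 := hφ.const_mul ((1 - ‖W‖ ^ 2)⁻¹)
  have hsq := hg1.mul hg1
  have hfun : (fun y => (1 - ‖W‖ ^ 2)⁻¹ * (Real.sqrt (sA W y) - ⟪W, y⟫) *
      ((1 - ‖W‖ ^ 2)⁻¹ * (Real.sqrt (sA W y) - ⟪W, y⟫)))
      = fun y => rF W y ^ 2 := by
    funext y; rw [rF]; ring
  rw [show ((fun y : V => (1 - ‖W‖ ^ 2)⁻¹ * (Real.sqrt (sA W y) - ⟪W, y⟫)) *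
      fun y : V => (1 - ‖W‖ ^ 2)⁻¹ * (Real.sqrt (sA W y) - ⟪W, y⟫))
      = fun y => rF W y ^ 2 from hfun] at hsq
  refine hsq.congr_fderiv ?_
  ext u
  simp only [rP, rF, innerCLM2_apply, ContinuousLinearMap.smul_apply,
    ContinuousLinearMap.sub_apply, ContinuousLinearMap.add_apply,
    ContinuousLinearMap.coe_smul', Pi.smul_apply, myInnerSL_apply,
    ContinuousLinearMap.comp_apply, ContinuousLinearMap.id_apply,
    smul_eq_mul, nsmul_eq_mul, Nat.cast_ofNat]
  field_simp
  ring

lemma rP_smul {W : V} (hW : ‖W‖ < 1) (x : V) {a : ℝ} (ha : 0 < a) :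
    rP W (a • x) = a • rP W x := by
  have hc := hc_pos hW
  have hsA : sA W (a • x) = a ^ 2 * sA W x := by
    simp only [sA, real_inner_smul_right, norm_smul, Real.norm_eq_abs, abs_of_pos ha, mul_pow]
    ring
  have hsqrt : Real.sqrt (sA W (a • x)) = a * Real.sqrt (sA W x) := by
    rw [hsA, Real.sqrt_mul (sq_nonneg a), Real.sqrt_sq ha.le]
  have hrF : rF W (a • x) = a * rF W x := by
    rw [rF, rF, hsqrt, real_inner_smul_right]; ring
  ext u
  have hinner : (innerCLM2 (a • x) : V →L[ℝ] ℝ) u = a * (innerCLM2 x : V →L[ℝ] ℝ) u := by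
    simp [innerCLM2, real_inner_smul_left]
  simp only [rP, hsqrt, hrF, real_inner_smul_right,
    ContinuousLinearMap.smul_apply, ContinuousLinearMap.sub_apply,
    ContinuousLinearMap.add_apply, ContinuousLinearMap.coe_smul', Pi.smul_apply,
    innerSL_apply_apply, smul_eq_mul, hinner, mul_inv]
  rcases eq_or_ne (Real.sqrt (sA W x)) 0 with h0 | h0
  · simp [h0]
    ring
  · field_simp

lemma rP_diff {W : V} (hW : ‖W‖ < 1) {x : V} (hx : x ≠ 0) :
    DifferentiableAt ℝ (rP W) x := by
  have hc := hc_pos hW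
  have hA := sA_pos hW hx
  have hs : Real.sqrt (sA W x) ≠ 0 := ne_of_gt (Real.sqrt_pos.mpr hA)
  have hdA : DifferentiableAt ℝ (sA W) x := (hasFDerivAt_sA x).differentiableAt
  have hdsqrt : DifferentiableAt ℝ (fun y => Real.sqrt (sA W y)) x := hdA.sqrt (ne_of_gt hA)
  have hdb : DifferentiableAt ℝ (fun y : V => ⟪W, y⟫) x := (innerSL ℝ W).differentiableAt
  have hdrF : DifferentiableAt ℝ (rF W) x := by
    have h := (hdsqrt.sub hdb).const_mul ((1 - ‖W‖ ^ 2)⁻¹)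
    have e : rF W = fun y => (1 - ‖W‖ ^ 2)⁻¹ * (Real.sqrt (sA W y) - ⟪W, y⟫) := by
      funext y; rw [rF, div_eq_inv_mul]
    rw [e]; exact h
  have hdinv : DifferentiableAt ℝ (fun y => (Real.sqrt (sA W y))⁻¹) x := hdsqrt.inv hs
  have hdM : DifferentiableAt ℝ
      (fun y : V => ⟪W, y⟫ • (innerSL ℝ W) + (1 - ‖W‖ ^ 2) • (innerCLM2 y)) x :=
    (hdb.smul_const (innerSL ℝ W : V →L[ℝ] ℝ)).add
      (((innerCLM2 (V := V)).differentiableAt).const_smul (1 - ‖W‖ ^ 2))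
  have hbr : DifferentiableAt ℝ
      (fun y : V => (Real.sqrt (sA W y))⁻¹ •
        (⟪W, y⟫ • (innerSL ℝ W) + (1 - ‖W‖ ^ 2) • (innerCLM2 y)) - innerSL ℝ W) x :=
    (hdinv.smul hdM).sub (differentiableAt_const _)
  have hcoef := hdrF.const_mul (2 / (1 - ‖W‖ ^ 2))
  have hfin := hcoef.smul hbr
  have e3 : ∀ y : ℝ, 2 * y / (1 - ‖W‖ ^ 2) = 2 / (1 - ‖W‖ ^ 2) * y := fun y => by ring
  have e4 : rP W = fun y => (2 / (1 - ‖W‖ ^ 2) * rF W y) •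
      ((Real.sqrt (sA W y))⁻¹ •
        (⟪W, y⟫ • (innerSL ℝ W) + (1 - ‖W‖ ^ 2) • (innerCLM2 y)) - innerSL ℝ W) := by
    funext y; rw [rP, e3 (rF W y)]
  rw [e4]; exact hfin

lemma fderiv_rP_self {W : V} (hW : ‖W‖ < 1) {v : V} (hv : v ≠ 0) :
    fderiv ℝ (rP W) v v = rP W v := by
  have hd := rP_diff hW hv
  have h1 : HasDerivAt (fun t : ℝ => rP W (v + t • v)) (fderiv ℝ (rP W) v v) 0 := by
    have hline : HasDerivAt (fun t : ℝ => v + t • v) v 0 := by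
      simpa using ((hasDerivAt_id (0:ℝ)).smul_const v).const_add v
    have hd' : HasFDerivAt (rP W) (fderiv ℝ (rP W) v) (v + (0:ℝ) • v) := by
      simpa using hd.hasFDerivAt
    have h := hd'.comp_hasDerivAt 0 hline
    exact h
  have h2 : HasDerivAt (fun t : ℝ => rP W (v + t • v)) (rP W v) 0 := by
    have heq : (fun t : ℝ => (1 + t) • rP W v) =ᶠ[nhds (0:ℝ)] fun t => rP W (v + t • v) := by
      filter_upwards [eventually_abs_sub_lt (0:ℝ) one_pos] with t ht
      rw [sub_zero] at ht
      have ht' : (0:ℝ) < 1 + t := by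
        rcases abs_lt.mp ht with ⟨h₁, h₂⟩; linarith
      have hvv : v + t • v = (1 + t) • v := by module
      rw [hvv, rP_smul hW v ht']
    have hbase : HasDerivAt (fun t : ℝ => (1 + t) • rP W v) (rP W v) 0 := by
      simpa using (((hasDerivAt_id (0:ℝ)).const_add 1).smul_const (rP W v))
    exact hbase.congr_of_eventuallyEq heq.symm
  exact h1.unique h2

lemma second_deriv {W : V} (hW : ‖W‖ < 1) {v : V} (hv : v ≠ 0) :
    fderiv ℝ (fderiv ℝ (fun x => randers W x ^ 2)) v v = rP W v := by
  have hkey : fderiv ℝ (fun x => randers W x ^ 2) =ᶠ[nhds v] rP W := by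
    filter_upwards [eventually_ne_nhds hv] with x hx
    have h1 : HasFDerivAt (fun y => randers W y ^ 2) (rP W x) x := by
      refine (hasFDerivAt_rF_sq hW hx).congr_of_eventuallyEq ?_
      filter_upwards [eventually_ne_nhds hx] with y hy
      rw [randers_eq W hy]
    exact h1.fderiv
  rw [hkey.fderiv_eq, fderiv_rP_self hW hv]

end Aux

/-- If `v ≠ 0` is the `Z`-gradient of the covector `⟪w̃, ·⟫` with `w̃ ≠ 0` (that is,
`g_v(v,u) = ⟪w̃,u⟫` for all `u`), then `(‖w̃‖/Z(v)) · (v − Z(v) W) = w̃`. -/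
theorem randers_gradient_relation {V : Type*} [NormedAddCommGroup V]
    [InnerProductSpace ℝ V] [FiniteDimensional ℝ V] (W : V) (hW : ‖W‖ < 1)
    (v : V) (hv : v ≠ 0) (wt : V) (hwt : wt ≠ 0)
    (hgrad : ∀ u : V, fundamentalTensor (randers W) v v u = ⟪wt, u⟫) :
    (‖wt‖ / randers W v) • (v - randers W v • W) = wt := by
  have hc := hc_pos hW
  have hA := sA_pos hW hv
  have hs : 0 < Real.sqrt (sA W v) := Real.sqrt_pos.mpr hA
  set s := Real.sqrt (sA W v) with hs_def
  set Z := randers W v with hZ_def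
  have hZ : Z = rF W v := randers_eq W hv
  have hZpos : 0 < Z := hZ ▸ rF_pos hW hv
  have hkeyZ : (1 - ‖W‖ ^ 2) * Z = s - ⟪W, v⟫ := by
    rw [hZ, rF, ← hs_def]; field_simp
  have hs2 : s ^ 2 = ⟪W, v⟫ ^ 2 + (1 - ‖W‖ ^ 2) * ‖v‖ ^ 2 := by
    rw [hs_def, Real.sq_sqrt hA.le]; rfl
  -- identify wt
  have hwt_eq : wt = (Z / s) • (v - Z • W) := by
    have h1 : ∀ u : V, ⟪wt, u⟫ = (1 / 2) * (rP W v u) := by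
      intro u
      rw [← hgrad u, fundamentalTensor, iteratedFDeriv_two_apply]
      simp only [Matrix.cons_val_zero, Matrix.cons_val_one, Matrix.head_cons]
      rw [second_deriv hW hv]
    have h2 : ∀ u : V, ⟪wt, u⟫ = ⟪(Z / s) • (v - Z • W), u⟫ := by
      intro u
      rw [h1 u]
      rw [real_inner_smul_left, inner_sub_left, real_inner_smul_left]
      simp only [rP, ← hZ, ← hs_def, innerCLM2_apply,
        ContinuousLinearMap.smul_apply, ContinuousLinearMap.sub_apply,
        ContinuousLinearMap.add_apply, ContinuousLinearMap.coe_smul', Pi.smul_apply,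
        myInnerSL_apply, smul_eq_mul]
      have hb : ⟪W, v⟫ = s - (1 - ‖W‖ ^ 2) * Z := by linarith
      rw [hb]
      field_simp
      ring
    have h3 : ⟪wt - (Z / s) • (v - Z • W), wt - (Z / s) • (v - Z • W)⟫ = (0:ℝ) := by
      rw [inner_sub_left]
      linear_combination h2 (wt - (Z / s) • (v - Z • W))
    have h4 : wt - (Z / s) • (v - Z • W) = 0 := inner_self_eq_zero.mp h3
    rw [sub_eq_zero] at h4
    exact h4
  have hnorm : ‖v - Z • W‖ = Z := by
    have e2 : (1 - ‖W‖ ^ 2) * Z ^ 2 + 2 * ⟪W, v⟫ * Z = ‖v‖ ^ 2 := by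
      nlinarith [hkeyZ, hs2, hc]
    have hn2 : ‖v - Z • W‖ ^ 2 = Z ^ 2 := by
      rw [norm_sub_sq_real, inner_smul_right, norm_smul, Real.norm_eq_abs,
        abs_of_pos hZpos, mul_pow]
      have hWv : ⟪v, W⟫ = ⟪W, v⟫ := real_inner_comm W v
      rw [hWv]
      nlinarith [e2]
    calc ‖v - Z • W‖ = Real.sqrt (‖v - Z • W‖ ^ 2) := (Real.sqrt_sq (norm_nonneg _)).symm
      _ = Real.sqrt (Z ^ 2) := by rw [hn2]
      _ = Z := Real.sqrt_sq hZpos.le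
  have hwtnorm : ‖wt‖ = Z ^ 2 / s := by
    rw [hwt_eq, norm_smul, Real.norm_eq_abs, abs_of_pos (div_pos hZpos hs), hnorm]
    ring
  rw [hwtnorm, hwt_eq]
  have hZZ : Z ^ 2 / s / Z = Z / s := by field_simp
  rw [hZZ]
end

section
/- Let V be a finite-dimensional real inner product space and let p ∈ V with 0 < ‖p‖ < 1. Let Z be the Randers norm with Zermelo data (⟨·,·⟩, p) (wind W = p). If v ∈ V with v ≠ 0 satisfies g_v(v,u) = ⟨2p, u⟩ for all u ∈ V (i.e., v is the Z-gradient at p of the function f(x) = ‖x‖², whose Riemannian gradient at p is 2p), then Z(v) = 2‖p‖ + 2‖p‖². In particular Z(v)² = 𝔟(f(p)) where 𝔟(t) = (2√t + 2t)², so f is Z-transnormal on the unit disc with this 𝔟, and 𝔟 is not C² at 0. -/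
open scoped RealInnerProductSpace
open Classical

section aux
variable {V : Type*} [NormedAddCommGroup V] [InnerProductSpace ℝ V]

/-- The quantity under the square root in the Randers norm. -/
noncomputable def rA (p x : V) : ℝ := ⟪p, x⟫ ^ 2 + (1 - ‖p‖ ^ 2) * ‖x‖ ^ 2

/-- The square of the Randers norm, as a globally defined smooth-off-zero function. -/
noncomputable def rG (p x : V) : ℝ := (Real.sqrt (rA p x) - ⟪p, x⟫) ^ 2 / (1 - ‖p‖ ^ 2) ^ 2

/-- The derivative of `rG p` at `x ≠ 0`. -/
noncomputable def rD (p x : V) : V →L[ℝ] ℝ :=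
  (2 / (1 - ‖p‖ ^ 2) ^ 2) • ((Real.sqrt (rA p x) - ⟪p, x⟫) •
    ((Real.sqrt (rA p x))⁻¹ • (⟪p, x⟫ • innerSL ℝ p + (1 - ‖p‖ ^ 2) • innerSL ℝ x)
      - innerSL ℝ p))

lemma rA_pos {p : V} (hp1 : ‖p‖ < 1) {x : V} (hx : x ≠ 0) : 0 < rA p x := by
  have h1 : 0 < 1 - ‖p‖ ^ 2 := by nlinarith [norm_nonneg p]
  have h2 : 0 < ‖x‖ ^ 2 := by have := norm_pos_iff.mpr hx; positivity
  have := sq_nonneg ⟪p, x⟫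
  unfold rA; nlinarith

lemma randers_eq_s9 (p : V) (x : V) :
    randers p x = (Real.sqrt (rA p x) - ⟪p, x⟫) / (1 - ‖p‖ ^ 2) := by
  unfold randers rA
  split_ifs with h
  · simp [h]
  · rfl

lemma randers_sq_eq (p : V) : (fun x => randers p x ^ 2) = rG p := by
  funext x
  rw [randers_eq_s9, rG, div_pow]

lemma rD_apply (p x u : V) : rD p x u = (2 / (1 - ‖p‖ ^ 2) ^ 2) *
    ((Real.sqrt (rA p x) - ⟪p, x⟫) *
      ((Real.sqrt (rA p x))⁻¹ * (⟪p, x⟫ * ⟪p, u⟫ + (1 - ‖p‖ ^ 2) * ⟪x, u⟫) - ⟪p, u⟫)) := by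
  simp only [rD, ContinuousLinearMap.smul_apply, ContinuousLinearMap.sub_apply,
    ContinuousLinearMap.add_apply, innerSL_apply_apply, smul_eq_mul]

lemma hasFDerivAt_rG {p : V} (hp1 : ‖p‖ < 1) {x : V} (hx : x ≠ 0) :
    HasFDerivAt (rG p) (rD p x) x := by
  have hA : 0 < rA p x := rA_pos hp1 hx
  have hsa : 0 < Real.sqrt (rA p x) := Real.sqrt_pos.mpr hA
  have h1 : 0 < 1 - ‖p‖ ^ 2 := by nlinarith [norm_nonneg p]
  have hB : HasFDerivAt (fun y : V => ⟪p, y⟫) (innerSL ℝ p) x :=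
    (innerSL ℝ p).hasFDerivAt
  have hN := (hasStrictFDerivAt_norm_sq x).hasFDerivAt
  have hrAeq : rA p = fun y => ⟪p, y⟫ * ⟪p, y⟫ + (1 - ‖p‖ ^ 2) * ‖y‖ ^ 2 := by
    funext y; rw [rA, sq]
  have hAder : HasFDerivAt (rA p)
      ((⟪p, x⟫ • innerSL ℝ p + ⟪p, x⟫ • innerSL ℝ p) +
        (1 - ‖p‖ ^ 2) • ((2 : ℕ) • innerSL ℝ x)) x := by
    rw [hrAeq]
    exact (hB.mul hB).add (hN.const_mul _)
  have hsq : HasFDerivAt (fun y : V => Real.sqrt (rA p y))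
      ((1 / (2 * Real.sqrt (rA p x))) •
        ((⟪p, x⟫ • innerSL ℝ p + ⟪p, x⟫ • innerSL ℝ p) +
          (1 - ‖p‖ ^ 2) • ((2 : ℕ) • innerSL ℝ x))) x :=
    hAder.sqrt hA.ne'
  have hdiff : HasFDerivAt (fun y : V => Real.sqrt (rA p y) - ⟪p, y⟫)
      ((1 / (2 * Real.sqrt (rA p x))) •
        ((⟪p, x⟫ • innerSL ℝ p + ⟪p, x⟫ • innerSL ℝ p) +
          (1 - ‖p‖ ^ 2) • ((2 : ℕ) • innerSL ℝ x))
        - innerSL ℝ p) x := hsq.sub hB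
  have hsq2 := (hdiff.mul hdiff).mul_const (((1 - ‖p‖ ^ 2) ^ 2)⁻¹)
  have : rG p = fun y => (Real.sqrt (rA p y) - ⟪p, y⟫) * (Real.sqrt (rA p y) - ⟪p, y⟫)
      * ((1 - ‖p‖ ^ 2) ^ 2)⁻¹ := by
    funext y; rw [rG, sq, div_eq_mul_inv]
  rw [this]
  refine hsq2.congr_fderiv ?_
  ext u
  simp [rD]
  field_simp
  ring

lemma contDiffAt_rG {p : V} (hp1 : ‖p‖ < 1) {x : V} (hx : x ≠ 0) :
    ContDiffAt ℝ 2 (rG p) x := by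
  have hA : 0 < rA p x := rA_pos hp1 hx
  have hB : ContDiffAt ℝ 2 (fun y : V => ⟪p, y⟫) x := (innerSL ℝ p).contDiff.contDiffAt
  have hAcd : ContDiffAt ℝ 2 (rA p) x := by
    have : ContDiffAt ℝ 2 (fun y : V => ‖y‖ ^ 2) x := (contDiff_norm_sq ℝ).contDiffAt
    exact (hB.pow 2).add (contDiffAt_const.mul this)
  have hsq : ContDiffAt ℝ 2 (fun y : V => Real.sqrt (rA p y)) x :=
    (Real.contDiffAt_sqrt hA.ne').comp x hAcd
  exact ((hsq.sub hB).pow 2).div_const _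

lemma rD_smul {p : V} (hp1 : ‖p‖ < 1) {x : V} (hx : x ≠ 0) {c : ℝ} (hc : 0 < c) :
    rD p (c • x) = c • rD p x := by
  have hA : 0 < rA p x := rA_pos hp1 hx
  have hsa : 0 < Real.sqrt (rA p x) := Real.sqrt_pos.mpr hA
  have hAc : rA p (c • x) = c ^ 2 * rA p x := by
    simp only [rA, real_inner_smul_right, norm_smul, mul_pow, Real.norm_eq_abs, sq_abs]
    ring
  have hsac : Real.sqrt (rA p (c • x)) = c * Real.sqrt (rA p x) := by
    rw [hAc, Real.sqrt_mul (sq_nonneg c), Real.sqrt_sq hc.le]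
  have hr : (1 : ℝ) - ‖p‖ ^ 2 ≠ 0 := by nlinarith [norm_nonneg p]
  ext u
  rw [rD_apply, ContinuousLinearMap.smul_apply, rD_apply, hsac, real_inner_smul_right,
    real_inner_smul_left, smul_eq_mul, mul_inv]
  field_simp

/-- The scalar algebra at the heart of the example. -/
lemma final_algebra {s sa B : ℝ} (hs0 : 0 < s) (hs1 : s < 1) (h0 : 0 < sa) (hsaB : B < sa)
    (E1 : 2 * (sa - B) ^ 2 = 4 * B * (1 - s ^ 2) ^ 2)
    (E2 : 2 * (sa - B) * (sa⁻¹ * B - s ^ 2) = 4 * s ^ 2 * (1 - s ^ 2) ^ 2) :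
    (sa - B) / (1 - s ^ 2) = 2 * s + 2 * s ^ 2 := by
  have h1r : 0 < 1 - s ^ 2 := by nlinarith
  set F : ℝ := (sa - B) / (1 - s ^ 2) with hFdef
  have hF : 0 < F := div_pos (by linarith) h1r
  have hsaF : sa - B = (1 - s ^ 2) * F := by
    rw [hFdef]; field_simp
  have hB : B = F ^ 2 / 2 := by
    have h := E1
    rw [hsaF] at h
    have h2 := mul_right_cancel₀ (pow_ne_zero 2 h1r.ne') (show
      (2 * F ^ 2) * (1 - s ^ 2) ^ 2 = (4 * B) * (1 - s ^ 2) ^ 2 by linear_combination h)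
    linarith
  have hsa' : sa = F ^ 2 / 2 + (1 - s ^ 2) * F := by
    have := hsaF; rw [hB] at this; linarith
  have E2' : 2 * (sa - B) * (B - s ^ 2 * sa) = 4 * s ^ 2 * (1 - s ^ 2) ^ 2 * sa := by
    have h := congrArg (· * sa) E2
    field_simp [h0.ne'] at h
    linarith [h]
  rw [hsaF, hB, hsa'] at E2'
  have hne : ((1 - s ^ 2) ^ 2 * F) ≠ 0 := by positivity
  have hquad : F ^ 2 = 4 * s ^ 2 * F + 4 * s ^ 2 * (1 - s ^ 2) := by
    have := mul_left_cancel₀ hne (show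
      ((1 - s ^ 2) ^ 2 * F) * (F ^ 2) =
        ((1 - s ^ 2) ^ 2 * F) * (4 * s ^ 2 * F + 4 * s ^ 2 * (1 - s ^ 2)) by
      linear_combination E2')
    linarith
  have hfac : (F - (2 * s + 2 * s ^ 2)) * (F + 2 * s * (1 - s)) = 0 := by
    linear_combination hquad
  rcases mul_eq_zero.mp hfac with h | h
  · linarith
  · nlinarith

/-- `t ↦ t√t` is differentiable at `0` with derivative `0`. -/
lemma hasDerivAt_mul_sqrt : HasDerivAt (fun t : ℝ => t * Real.sqrt t) 0 0 := by
  rw [hasDerivAt_iff_isLittleO]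
  simp only [Real.sqrt_zero, mul_zero, sub_zero, zero_mul, smul_eq_mul]
  refine Asymptotics.isLittleO_iff.mpr fun c hc => ?_
  have hcont : Filter.Tendsto Real.sqrt (nhds 0) (nhds 0) := by
    simpa using Real.continuous_sqrt.tendsto (0 : ℝ)
  have hev : ∀ᶠ t : ℝ in nhds 0, Real.sqrt t < c :=
    hcont (Iio_mem_nhds hc)
  filter_upwards [hev] with t ht
  rw [norm_mul, Real.norm_eq_abs (Real.sqrt t), abs_of_nonneg (Real.sqrt_nonneg t)]
  have := norm_nonneg t
  nlinarith [Real.sqrt_nonneg t]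

lemma not_contDiffAt_b : ¬ ContDiffAt ℝ 2 (fun t : ℝ => (2 * Real.sqrt t + 2 * t) ^ 2) 0 := by
  intro h
  set f : ℝ → ℝ := fun t => (2 * Real.sqrt t + 2 * t) ^ 2 with hf
  have hd : DifferentiableAt ℝ f 0 := h.differentiableAt (by norm_num)
  have hF : HasDerivAt f (deriv f 0) 0 := hd.hasDerivAt
  -- on the left, f agrees with 4t², so deriv f 0 = 0
  have hg1 : HasDerivWithinAt (fun t : ℝ => 4 * t ^ 2) 0 (Set.Iio 0) 0 := by
    have : HasDerivAt (fun t : ℝ => 4 * t ^ 2) 0 0 := by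
      simpa using (hasDerivAt_pow 2 (0 : ℝ)).const_mul (4 : ℝ)
    exact this.hasDerivWithinAt
  have hfg1 : HasDerivWithinAt f 0 (Set.Iio 0) 0 := by
    refine hg1.congr (fun y hy => ?_) (by simp [hf])
    have hy0 : y < 0 := hy
    have : Real.sqrt y = 0 := Real.sqrt_eq_zero_of_nonpos hy0.le
    simp [hf, this]; ring
  -- on the right, f agrees with 4t + 4t² + 8 t √t, so deriv f 0 = 4
  have hg2 : HasDerivWithinAt (fun t : ℝ => 4 * t + 4 * t ^ 2 + 8 * (t * Real.sqrt t))
      4 (Set.Ioi 0) 0 := by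
    have h1 : HasDerivAt (fun t : ℝ => 4 * t) 4 0 := by
      simpa using (hasDerivAt_id (0 : ℝ)).const_mul (4 : ℝ)
    have h2 : HasDerivAt (fun t : ℝ => 4 * t ^ 2) 0 0 := by
      simpa using (hasDerivAt_pow 2 (0 : ℝ)).const_mul (4 : ℝ)
    have h3 : HasDerivAt (fun t : ℝ => 8 * (t * Real.sqrt t)) 0 0 := by
      simpa using hasDerivAt_mul_sqrt.const_mul (8 : ℝ)
    have := (h1.add h2).add h3
    have h4 : (4 : ℝ) + 0 + 0 = 4 := by norm_num
    rw [h4] at this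
    exact this.hasDerivWithinAt
  have hfg2 : HasDerivWithinAt f 4 (Set.Ioi 0) 0 := by
    refine hg2.congr (fun y hy => ?_) (by simp [hf])
    have hy0 : (0 : ℝ) < y := hy
    have hsq : Real.sqrt y ^ 2 = y := Real.sq_sqrt hy0.le
    simp only [hf]
    nlinarith [Real.sqrt_nonneg y]
  have h1 : deriv f 0 = 0 := by
    have ha := hfg1.derivWithin (uniqueDiffWithinAt_Iio (0 : ℝ))
    have hb := (hF.hasDerivWithinAt (s := Set.Iio 0)).derivWithin
      (uniqueDiffWithinAt_Iio (0 : ℝ))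
    rw [← hb]; exact ha
  have h2 : deriv f 0 = 4 := by
    have ha := hfg2.derivWithin (uniqueDiffWithinAt_Ioi (0 : ℝ))
    have hb := (hF.hasDerivWithinAt (s := Set.Ioi 0)).derivWithin
      (uniqueDiffWithinAt_Ioi (0 : ℝ))
    rw [← hb]; exact ha
  rw [h1] at h2
  norm_num at h2

end aux

/-- Example: on the unit disc with wind `W = p` at the point `p` (with `0 < ‖p‖ < 1`),
if `v` is the `Z`-gradient of `f(x) = ‖x‖²` at `p` (whose Riemannian gradient is `2p`),
then `Z(v) = 2‖p‖ + 2‖p‖²`; in particular `Z(v)² = 𝔟(f(p))` for `𝔟(t) = (2√t + 2t)²`,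
and this `𝔟` is not `C²` at `0`. -/
theorem randers_transnormal_example {V : Type*} [NormedAddCommGroup V]
    [InnerProductSpace ℝ V] [FiniteDimensional ℝ V]
    (p : V) (hp0 : 0 < ‖p‖) (hp1 : ‖p‖ < 1) (v : V) (hv : v ≠ 0)
    (hgrad : ∀ u : V, fundamentalTensor (randers p) v v u = ⟪(2 : ℝ) • p, u⟫) :
    randers p v = 2 * ‖p‖ + 2 * ‖p‖ ^ 2 ∧
      randers p v ^ 2 = (2 * Real.sqrt (‖p‖ ^ 2) + 2 * ‖p‖ ^ 2) ^ 2 ∧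
      ¬ ContDiffAt ℝ 2 (fun t : ℝ => (2 * Real.sqrt t + 2 * t) ^ 2) 0 := by
  have h1r : 0 < 1 - ‖p‖ ^ 2 := by nlinarith [norm_nonneg p]
  -- Step 1: the second derivative of the squared Randers norm at v, in direction (v, ·),
  -- is rD p v (Euler's relation via 1-homogeneity of the derivative).
  have hfd : fderiv ℝ (rG p) v = rD p v := (hasFDerivAt_rG hp1 hv).fderiv
  have hΦ : ContDiffAt ℝ 1 (fderiv ℝ (rG p)) v :=
    (contDiffAt_rG hp1 hv).fderiv_right (le_refl 2)
  have hΦd : DifferentiableAt ℝ (fderiv ℝ (rG p)) v := hΦ.differentiableAt one_ne_zero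
  have hc : HasDerivAt (fun t : ℝ => v + t • v) v 0 := by
    simpa using ((hasDerivAt_id (0 : ℝ)).smul_const v).const_add v
  have hline : HasDerivAt (fun t : ℝ => fderiv ℝ (rG p) (v + t • v))
      (fderiv ℝ (fderiv ℝ (rG p)) v v) 0 := by
    have h0 : v + (0 : ℝ) • v = v := by simp
    have hΦd' : HasFDerivAt (fderiv ℝ (rG p)) (fderiv ℝ (fderiv ℝ (rG p)) v) (v + (0 : ℝ) • v) := by
      rw [h0]; exact hΦd.hasFDerivAt
    have := hΦd'.comp_hasDerivAt 0 hc
    exact this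
  have heq : (fun t : ℝ => fderiv ℝ (rG p) (v + t • v)) =ᶠ[nhds (0 : ℝ)]
      (fun t => (1 + t) • rD p v) := by
    filter_upwards [Ioi_mem_nhds (show (-1 : ℝ) < 0 by norm_num)] with t ht
    have h1t : 0 < 1 + t := by
      have : (-1 : ℝ) < t := ht
      linarith
    have hvt : v + t • v = (1 + t) • v := by rw [add_smul, one_smul]
    rw [hvt, (hasFDerivAt_rG hp1 (smul_ne_zero h1t.ne' hv)).fderiv, rD_smul hp1 hv h1t]
  have hline2 : HasDerivAt (fun t : ℝ => (1 + t) • rD p v) (rD p v) 0 := by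
    simpa using (((hasDerivAt_id (0 : ℝ)).const_add 1).smul_const (rD p v))
  have hD2 : fderiv ℝ (fderiv ℝ (rG p)) v v = rD p v :=
    hline.unique (hline2.congr_of_eventuallyEq heq)
  -- Step 2: translate the gradient hypothesis
  have key : ∀ u : V, rD p v u = 4 * ⟪p, u⟫ := by
    intro u
    have h := hgrad u
    rw [fundamentalTensor, randers_sq_eq, iteratedFDeriv_two_apply] at h
    simp only [Matrix.cons_val_zero, Matrix.cons_val_one, Matrix.head_cons] at h
    rw [hD2, real_inner_smul_left] at h
    rw [rD_apply] at h ⊢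
    linarith
  -- Step 3: scalar equations
  have hA : 0 < rA p v := rA_pos hp1 hv
  have hsa : 0 < Real.sqrt (rA p v) := Real.sqrt_pos.mpr hA
  have hsa2 : Real.sqrt (rA p v) ^ 2 = rA p v := Real.sq_sqrt hA.le
  have hn : 0 < ‖v‖ ^ 2 := by have := norm_pos_iff.mpr hv; positivity
  have hsaB : ⟪p, v⟫ < Real.sqrt (rA p v) := by
    have hBlt : ⟪p, v⟫ ^ 2 < rA p v := by rw [rA]; nlinarith
    calc ⟪p, v⟫ ≤ |⟪p, v⟫| := le_abs_self _
      _ = Real.sqrt (⟪p, v⟫ ^ 2) := (Real.sqrt_sq_eq_abs _).symm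
      _ < Real.sqrt (rA p v) := Real.sqrt_lt_sqrt (sq_nonneg _) hBlt
  have E1 : 2 * (Real.sqrt (rA p v) - ⟪p, v⟫) ^ 2 = 4 * ⟪p, v⟫ * (1 - ‖p‖ ^ 2) ^ 2 := by
    have h := key v
    rw [rD_apply] at h
    rw [real_inner_self_eq_norm_sq] at h
    have hAv : ⟪p, v⟫ * ⟪p, v⟫ + (1 - ‖p‖ ^ 2) * ‖v‖ ^ 2 = Real.sqrt (rA p v) ^ 2 := by
      rw [hsa2, rA]; ring
    rw [hAv] at h
    have h2 : (Real.sqrt (rA p v))⁻¹ * Real.sqrt (rA p v) ^ 2 = Real.sqrt (rA p v) := by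
      field_simp
    rw [h2] at h
    field_simp at h
    linarith
  have E2 : 2 * (Real.sqrt (rA p v) - ⟪p, v⟫) *
      ((Real.sqrt (rA p v))⁻¹ * ⟪p, v⟫ - ‖p‖ ^ 2) = 4 * ‖p‖ ^ 2 * (1 - ‖p‖ ^ 2) ^ 2 := by
    have h := key p
    rw [rD_apply] at h
    rw [real_inner_self_eq_norm_sq] at h
    rw [real_inner_comm v p] at h
    have hmid : ⟪v, p⟫ * ‖p‖ ^ 2 + (1 - ‖p‖ ^ 2) * ⟪v, p⟫ = ⟪v, p⟫ := by ring
    rw [hmid] at h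
    rw [real_inner_comm v p]
    field_simp at h
    field_simp
    linarith
  have hmain : randers p v = 2 * ‖p‖ + 2 * ‖p‖ ^ 2 := by
    rw [randers_eq_s9]
    exact final_algebra hp0 hp1 hsa hsaB E1 E2
  refine ⟨hmain, ?_, not_contDiffAt_b⟩
  rw [hmain, Real.sqrt_sq (norm_nonneg p)]
end
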